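/- Strengthened product uncertainty relation (Maccone–Pati): for self-adjoint A, B, a unit vector ψ with ΔA > 0, ΔB > 0, and a unit vector ψ⊥ orthogonal to ψ, if 1 − (1/2)|⟨ψ, (A/ΔA ± iB/ΔB)ψ⊥⟩|² > 0 then ΔA·ΔB ≥ (±(i/2)⟨ψ,[A,B]ψ⟩) / (1 − (1/2)|⟨ψ,(A/ΔA ± iB/ΔB)ψ⊥⟩|²), with the sign chosen so the numerator is nonnegative. -/

import Mathlib

open Complex

local notation "⟪" x ", " y "⟫" => @inner ℂ _ _ x y

/-- Standard deviation of a (self-adjoint) operator `A` in state `ψ`. -/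
noncomputable def sdev {E : Type*} [NormedAddCommGroup E] [InnerProductSpace ℂ E]
    (A : E →ₗ[ℂ] E) (ψ : E) : ℝ :=
  Real.sqrt ((⟪ψ, A (A ψ)⟫).re - ((⟪ψ, A ψ⟫).re) ^ 2)

/-- Maccone–Pati strengthened product uncertainty relation:
ΔA·ΔB ≥ (±(i/2)⟨ψ,[A,B]ψ⟩) / (1 − (1/2)|⟨ψ,(A/ΔA ± iB/ΔB)ψ⊥⟩|²). -/
theorem maccone_pati_product
    {E : Type*} [NormedAddCommGroup E] [InnerProductSpace ℂ E]
    (A B : E →ₗ[ℂ] E)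
    (hA : ∀ x y : E, ⟪A x, y⟫ = ⟪x, A y⟫)
    (hB : ∀ x y : E, ⟪B x, y⟫ = ⟪x, B y⟫)
    (ψ ψp : E) (hψ : ‖ψ‖ = 1) (hψp : ‖ψp‖ = 1) (horth : ⟪ψ, ψp⟫ = 0)
    (hΔA : 0 < sdev A ψ) (hΔB : 0 < sdev B ψ)
    (s : ℝ) (hs : s = 1 ∨ s = -1)
    (hnum : 0 ≤ s * (Complex.I / 2 * ⟪ψ, A (B ψ) - B (A ψ)⟫).re)
    (hden : 0 < 1 - (1 / 2) *
      (‖⟪ψ, ((sdev A ψ : ℂ))⁻¹ • A ψp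
        + ((s : ℂ) * Complex.I) • (((sdev B ψ : ℂ))⁻¹ • B ψp)⟫‖) ^ 2) :
    sdev A ψ * sdev B ψ ≥
      (s * (Complex.I / 2 * ⟪ψ, A (B ψ) - B (A ψ)⟫).re) /
        (1 - (1 / 2) *
          (‖⟪ψ, ((sdev A ψ : ℂ))⁻¹ • A ψp
            + ((s : ℂ) * Complex.I) • (((sdev B ψ : ℂ))⁻¹ • B ψp)⟫‖) ^ 2) := by
  have hψψ : ⟪ψ, ψ⟫ = 1 := by
    rw [inner_self_eq_norm_sq_to_K, hψ]; norm_num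
  have hψpψ : ⟪ψp, ψ⟫ = 0 := by
    rw [← inner_conj_symm, horth]; simp
  set a := ⟪ψ, A ψ⟫ with ha_def
  set b := ⟪ψ, B ψ⟫ with hb_def
  have haa : (starRingEnd ℂ) a = a := by
    rw [ha_def, inner_conj_symm, hA]
  have hbb : (starRingEnd ℂ) b = b := by
    rw [hb_def, inner_conj_symm, hB]
  have haim : a.im = 0 := by
    have := congrArg Complex.im haa; simp [Complex.conj_im] at this; linarith
  have hbim : b.im = 0 := by
    have := congrArg Complex.im hbb; simp [Complex.conj_im] at this; linarith
  have ha_re : ((a.re : ℂ)) = a := by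
    exact Complex.conj_eq_iff_re.mp haa
  have hb_re : ((b.re : ℂ)) = b := by
    exact Complex.conj_eq_iff_re.mp hbb
  -- centered vectors
  set wA := A ψ - a • ψ with hwA_def
  set wB := B ψ - b • ψ with hwB_def
  have hwAwA : ⟪wA, wA⟫ = ⟪ψ, A (A ψ)⟫ - a ^ 2 := by
    simp only [hwA_def, inner_sub_left, inner_sub_right, inner_smul_left, inner_smul_right,
      hA, hψψ, haa, ← ha_def]
    ring
  have hwBwB : ⟪wB, wB⟫ = ⟪ψ, B (B ψ)⟫ - b ^ 2 := by
    simp only [hwB_def, inner_sub_left, inner_sub_right, inner_smul_left, inner_smul_right,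
      hB, hψψ, hbb, ← hb_def]
    ring
  have hwAB : ⟪wA, wB⟫ = ⟪ψ, A (B ψ)⟫ - a * b := by
    simp only [hwA_def, hwB_def, inner_sub_left, inner_sub_right, inner_smul_left,
      inner_smul_right, hA, hψψ, haa, ← ha_def, ← hb_def]
    ring
  -- squared sdevs
  have hradA : 0 < (⟪ψ, A (A ψ)⟫).re - a.re ^ 2 := Real.sqrt_pos.mp hΔA
  have hradB : 0 < (⟪ψ, B (B ψ)⟫).re - b.re ^ 2 := Real.sqrt_pos.mp hΔB
  have hΔA_sq : sdev A ψ ^ 2 = (⟪ψ, A (A ψ)⟫).re - a.re ^ 2 := Real.sq_sqrt hradA.le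
  have hΔB_sq : sdev B ψ ^ 2 = (⟪ψ, B (B ψ)⟫).re - b.re ^ 2 := Real.sq_sqrt hradB.le
  set W := ⟪ψ, A (B ψ)⟫ with hW_def
  have hcW : ⟪wB, wA⟫ = (starRingEnd ℂ) W - a * b := by
    rw [← inner_conj_symm, hwAB]
    simp [haa, hbb]
  set g := ((sdev A ψ : ℂ))⁻¹ • wA - ((s : ℂ) * Complex.I) • (((sdev B ψ : ℂ))⁻¹ • wB)
    with hg_def
  have hgg : ⟪g, g⟫ = ((sdev A ψ : ℂ))⁻¹ ^ 2 * (⟪ψ, A (A ψ)⟫ - a ^ 2)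
      + (s : ℂ) ^ 2 * ((sdev B ψ : ℂ))⁻¹ ^ 2 * (⟪ψ, B (B ψ)⟫ - b ^ 2)
      + (s : ℂ) * Complex.I * ((sdev A ψ : ℂ))⁻¹ * ((sdev B ψ : ℂ))⁻¹
        * ((starRingEnd ℂ) W - W) := by
    simp only [hg_def, inner_sub_left, inner_sub_right, inner_smul_left, inner_smul_right,
      hwAwA, hwBwB, hwAB, hcW, map_mul, map_inv₀, Complex.conj_ofReal, Complex.conj_I]
    linear_combination ((s:ℂ)^2 * ((sdev B ψ : ℂ))⁻¹^2 * (b^2 - ⟪ψ, B (B ψ)⟫)) * Complex.I_sq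
  have hs2 : s ^ 2 = 1 := by rcases hs with h | h <;> simp [h]
  -- real part of ⟪g,g⟫
  have hgg_re : (⟪g, g⟫).re
      = (sdev A ψ)⁻¹ ^ 2 * ((⟪ψ, A (A ψ)⟫).re - a.re ^ 2)
        + s ^ 2 * (sdev B ψ)⁻¹ ^ 2 * ((⟪ψ, B (B ψ)⟫).re - b.re ^ 2)
        + 2 * s * (sdev A ψ)⁻¹ * (sdev B ψ)⁻¹ * W.im := by
    rw [hgg]
    simp [Complex.add_re, Complex.sub_re, Complex.mul_re, Complex.mul_im,
      Complex.conj_re, Complex.conj_im, Complex.I_re, Complex.I_im,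
      Complex.ofReal_re, Complex.ofReal_im, haim, hbim, pow_two]
    ring
  have hgg_re' : (⟪g, g⟫).re = 2 + 2 * s * (sdev A ψ)⁻¹ * (sdev B ψ)⁻¹ * W.im := by
    rw [hgg_re, ← hΔA_sq, ← hΔB_sq, hs2]
    field_simp
    norm_num
    ring
  -- the commutator expectation
  have hBA : ⟪ψ, B (A ψ)⟫ = (starRingEnd ℂ) W := by
    rw [← hB, ← inner_conj_symm, hA]
  have hC : s * (Complex.I / 2 * ⟪ψ, A (B ψ) - B (A ψ)⟫).re = -(s * W.im) := by
    rw [inner_sub_right, hBA]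
    have h2 : (Complex.I / 2 * (W - (starRingEnd ℂ) W)).re = -W.im := by
      simp [Complex.mul_re, Complex.sub_re, Complex.sub_im, Complex.conj_re, Complex.conj_im,
        Complex.I_re, Complex.I_im, Complex.div_re, Complex.div_im]
      ring
    rw [h2]
    ring
  -- relate the statement's inner product to ⟪ψp, g⟫
  have hDg : ⟪ψp, g⟫ = (starRingEnd ℂ) ⟪ψ, ((sdev A ψ : ℂ))⁻¹ • A ψp
      + ((s : ℂ) * Complex.I) • (((sdev B ψ : ℂ))⁻¹ • B ψp)⟫ := by
    simp only [hg_def, hwA_def, hwB_def, inner_add_right, inner_sub_right, inner_smul_right,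
      map_add, map_mul, map_inv₀, Complex.conj_ofReal, Complex.conj_I, inner_conj_symm,
      hA, hB, hψpψ]
    ring
  have habs : ‖⟪ψ, ((sdev A ψ : ℂ))⁻¹ • A ψp
      + ((s : ℂ) * Complex.I) • (((sdev B ψ : ℂ))⁻¹ • B ψp)⟫‖ = ‖⟪ψp, g⟫‖ := by
    rw [hDg, Complex.norm_conj]
  set D := ‖⟪ψ, ((sdev A ψ : ℂ))⁻¹ • A ψp
      + ((s : ℂ) * Complex.I) • (((sdev B ψ : ℂ))⁻¹ • B ψp)⟫‖ with hD_def
  have hCS : ‖⟪ψp, g⟫‖ ≤ ‖g‖ := by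
    have := norm_inner_le_norm (𝕜 := ℂ) ψp g
    simpa [hψp] using this
  have hng : ‖g‖ ^ 2 = (⟪g, g⟫).re := by
    rw [@norm_sq_eq_re_inner ℂ]; rfl
  have hD2 : D ^ 2 ≤ 2 + 2 * s * (sdev A ψ)⁻¹ * (sdev B ψ)⁻¹ * W.im := by
    rw [← hgg_re', ← hng, habs]
    exact pow_le_pow_left₀ (norm_nonneg _) hCS 2
  -- final assembly
  rw [ge_iff_le, div_le_iff₀ hden]
  have e : sdev A ψ * sdev B ψ * (2 + 2 * s * (sdev A ψ)⁻¹ * (sdev B ψ)⁻¹ * W.im)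
      = 2 * (sdev A ψ * sdev B ψ) + 2 * s * W.im := by
    field_simp
  have hmul := mul_le_mul_of_nonneg_left hD2 (mul_pos hΔA hΔB).le
  rw [e] at hmul
  rw [hC]
  nlinarith [mul_pos hΔA hΔB]
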